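/- Let n, m, p ∈ ℕ with p ≤ n and p ≤ m, and let s = (s_x,s_y), t = (t_x,t_y) be distinct vertices of the n×m grid graph G_{n×m} with s_x + s_y ≤ p − 3. For each i with s_x ≤ i ≤ p − 3 − s_y define cut_i := {{(i,y),(i+1,y)} : 0 ≤ y ≤ p−3−i} ∪ {{(x,p−3−i),(x,p−2−i)} : 0 ≤ x ≤ i}. Suppose that for every such i we have t_x > i or t_y > p − 3 − i (i.e., t lies outside each of the corresponding rectangles). Then: (i) each cut_i is a set of exactly p − 1 edges of G_{n×m}; (ii) every s-t path in G_{n×m} contains an edge of each cut_i; (iii) the sets cut_i are pairwise disjoint, and there are p − 2 − (s_x + s_y) of them; and consequently (iv) every family of p s-t paths in G_{n×m} has at least p − 2 − (s_x + s_y) shared edges. -/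

import Mathlib

/-- The `n × m` grid graph: vertices are pairs `(x, y)` of naturals with `x < n`
and `y < m`, and two vertices are adjacent iff they are at Manhattan distance 1. -/
def gridGraph (n m : ℕ) : SimpleGraph (ℕ × ℕ) where
  Adj u v := u.1 < n ∧ u.2 < m ∧ v.1 < n ∧ v.2 < m ∧
    ((u.1 : ℤ) - v.1).natAbs + ((u.2 : ℤ) - v.2).natAbs = 1
  symm := by
    constructor
    rintro u v ⟨h1, h2, h3, h4, h5⟩
    exact ⟨h3, h4, h1, h2, by omega⟩
  loopless := by
    constructor
    rintro u ⟨-, -, -, -, h⟩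
    omega

/-- The set of shared edges of a family of `s`-`t` walks (an edge is shared if it
occurs in two walks with distinct indices). -/
def sharedEdges {V : Type*} {G : SimpleGraph V} {s t : V} {p : ℕ}
    (P : Fin p → G.Walk s t) : Set (Sym2 V) :=
  {e | ∃ i j, i ≠ j ∧ e ∈ (P i).edges ∧ e ∈ (P j).edges}

/-- `cutI p i = {{(i,y),(i+1,y)} : 0 ≤ y ≤ p−3−i} ∪ {{(x,p−3−i),(x,p−2−i)} : 0 ≤ x ≤ i}`. -/
def cutI (p i : ℕ) : Finset (Sym2 (ℕ × ℕ)) :=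
  ((Finset.range (p - 2 - i)).image fun y => Sym2.mk ((i, y) : ℕ × ℕ) (i + 1, y)) ∪
  ((Finset.range (i + 1)).image fun x =>
    Sym2.mk ((x, p - 3 - i) : ℕ × ℕ) (x, p - 2 - i))

lemma cutI_card {p i : ℕ} (hi : i + 3 ≤ p) : (cutI p i).card = p - 1 := by
  rw [cutI, Finset.card_union_of_disjoint, Finset.card_image_of_injective _ ?_,
    Finset.card_image_of_injective _ ?_, Finset.card_range, Finset.card_range]
  · omega
  · intro x y hxy
    simp [Sym2.eq_iff, Prod.ext_iff] at hxy
    omega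
  · intro x y hxy
    simp [Sym2.eq_iff, Prod.ext_iff] at hxy
    omega
  · rw [Finset.disjoint_left]
    rintro e he1 he2
    simp only [Finset.mem_image, Finset.mem_range] at he1 he2
    obtain ⟨y, hy, rfl⟩ := he1
    obtain ⟨x, hx, he⟩ := he2
    simp [Sym2.eq_iff, Prod.ext_iff] at he
    omega

lemma cutI_disjoint {p i j : ℕ} (hi : i + 3 ≤ p) (hj : j + 3 ≤ p) (hij : i ≠ j) :
    Disjoint (cutI p i) (cutI p j) := by
  rw [Finset.disjoint_left]
  intro e hei hej
  simp only [cutI, Finset.mem_union, Finset.mem_image, Finset.mem_range] at hei hej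
  rcases hei with ⟨y, hy, rfl⟩ | ⟨x, hx, rfl⟩ <;>
    rcases hej with ⟨y', hy', he⟩ | ⟨x', hx', he⟩ <;>
    · simp [Sym2.eq_iff, Prod.ext_iff] at he
      omega

lemma cutI_subset {n m p i : ℕ} (hpn : p ≤ n) (hpm : p ≤ m) (hi : i + 3 ≤ p) :
    ↑(cutI p i) ⊆ (gridGraph n m).edgeSet := by
  intro e he
  simp only [Finset.mem_coe, cutI, Finset.mem_union, Finset.mem_image, Finset.mem_range] at he
  rcases he with ⟨y, hy, rfl⟩ | ⟨x, hx, rfl⟩ <;>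
  · rw [SimpleGraph.mem_edgeSet]
    refine ⟨?_, ?_, ?_, ?_, ?_⟩ <;> simp <;> omega

lemma cutI_cross {n m p i : ℕ} (hi : i + 3 ≤ p)
    {t : ℕ × ℕ} (htout : i < t.1 ∨ p - 3 - i < t.2) :
    ∀ {u : ℕ × ℕ} (W : (gridGraph n m).Walk u t), u.1 ≤ i → u.2 ≤ p - 3 - i →
      ∃ e ∈ cutI p i, e ∈ W.edges := by
  intro u W
  induction W with
  | nil =>
    intro h1 h2
    rcases htout with h | h <;> omega
  | @cons a b c h W ih =>
    intro hu1 hu2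
    by_cases hb : b.1 ≤ i ∧ b.2 ≤ p - 3 - i
    · obtain ⟨e, he, hew⟩ := ih htout hb.1 hb.2
      exact ⟨e, he, List.mem_cons_of_mem _ hew⟩
    · refine ⟨s(a, b), ?_, List.mem_cons_self⟩
      obtain ⟨a1, a2⟩ := a
      obtain ⟨b1, b2⟩ := b
      obtain ⟨-, -, -, -, h5⟩ := h
      simp only [not_and, not_le] at hb
      simp only [] at hu1 hu2 hb h5
      simp only [cutI, Finset.mem_union, Finset.mem_image, Finset.mem_range]
      rcases (show (b1 = a1 + 1 ∧ b2 = a2) ∨ (a1 = b1 + 1 ∧ b2 = a2) ∨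
          (b2 = a2 + 1 ∧ b1 = a1) ∨ (a2 = b2 + 1 ∧ b1 = a1) from by omega) with
        ⟨h1, h2⟩ | ⟨h1, h2⟩ | ⟨h1, h2⟩ | ⟨h1, h2⟩
      · exact Or.inl ⟨a2, by omega, by
          rw [show i = a1 by omega, show b1 = a1 + 1 from h1, show b2 = a2 from h2]⟩
      · exfalso; omega
      · exact Or.inr ⟨a1, by omega, by
          rw [show p - 3 - i = a2 by omega, show p - 2 - i = a2 + 1 by omega,
            show b1 = a1 from h2, show b2 = a2 + 1 from h1]⟩
      · exfalso; omega

theorem stmt9 (n m p : ℕ) (hpn : p ≤ n) (hpm : p ≤ m)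
    (s t : ℕ × ℕ) (hst : s ≠ t)
    (hs : s.1 < n ∧ s.2 < m) (ht : t.1 < n ∧ t.2 < m)
    (hsp : s.1 + s.2 + 3 ≤ p)
    (htout : ∀ i, s.1 ≤ i → i + s.2 + 3 ≤ p → t.1 > i ∨ t.2 > p - 3 - i) :
    -- (i) each cutI is a set of exactly `p - 1` edges of the grid graph
    (∀ i, s.1 ≤ i → i + s.2 + 3 ≤ p →
      ↑(cutI p i) ⊆ (gridGraph n m).edgeSet ∧ (cutI p i).card = p - 1) ∧
    -- (ii) every s-t path contains an edge of each cutI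
    (∀ i, s.1 ≤ i → i + s.2 + 3 ≤ p →
      ∀ W : (gridGraph n m).Walk s t, W.IsPath → ∃ e ∈ cutI p i, e ∈ W.edges) ∧
    -- (iii) the cuts are pairwise disjoint, and there are `p - 2 - (s.1 + s.2)` of them
    (∀ i j, s.1 ≤ i → i + s.2 + 3 ≤ p → s.1 ≤ j → j + s.2 + 3 ≤ p → i ≠ j →
      Disjoint (cutI p i) (cutI p j)) ∧
    ((Finset.Icc s.1 (p - 3 - s.2)).card = p - 2 - (s.1 + s.2)) ∧
    -- (iv) every family of `p` s-t paths has at least `p - 2 - (s.1 + s.2)` shared edges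
    (∀ P : Fin p → (gridGraph n m).Walk s t, (∀ i, (P i).IsPath) →
      p - 2 - (s.1 + s.2) ≤ (sharedEdges P).ncard) := by
  classical
  refine ⟨fun i h1 h2 => ⟨cutI_subset hpn hpm (by omega), cutI_card (by omega)⟩,
    fun i h1 h2 W _ => cutI_cross (by omega) (htout i h1 h2) W h1 (by omega),
    fun i j h1 h2 h3 h4 hij => cutI_disjoint (by omega) (by omega) hij,
    by rw [Nat.card_Icc]; omega, ?_⟩
  intro P hP
  have hfin : (sharedEdges P).Finite := by
    apply Set.Finite.subset (Set.finite_iUnion fun k : Fin p => (P k).edges.toFinset.finite_toSet)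
    rintro e ⟨i, j, hij, hei, hej⟩
    exact Set.mem_iUnion.2 ⟨i, by simpa using hei⟩
  have key : ∀ k : ℕ, ∃ e, k ∈ Finset.Icc s.1 (p - 3 - s.2) →
      e ∈ cutI p k ∧ e ∈ sharedEdges P := by
    intro k
    by_cases hk : k ∈ Finset.Icc s.1 (p - 3 - s.2)
    · rw [Finset.mem_Icc] at hk
      have hexists : ∀ q : Fin p, ∃ e, e ∈ cutI p k ∧ e ∈ (P q).edges := by
        intro q
        obtain ⟨e, he1, he2⟩ := cutI_cross (n := n) (m := m) (by omega)
          (htout k hk.1 (by omega)) (P q) hk.1 (by omega)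
        exact ⟨e, he1, he2⟩
      choose f hf1 hf2 using hexists
      obtain ⟨q1, -, q2, -, hne, heq⟩ :=
        Finset.exists_ne_map_eq_of_card_lt_of_maps_to (s := (Finset.univ : Finset (Fin p)))
          (t := cutI p k) (by rw [cutI_card (by omega)]; simp; omega) (fun q _ => hf1 q)
      exact ⟨f q1, fun _ => ⟨hf1 q1, q1, q2, hne, hf2 q1, heq ▸ hf2 q2⟩⟩
    · exact ⟨default, fun h => absurd h hk⟩
  choose g hg using key
  have hinj : Set.InjOn g ↑(Finset.Icc s.1 (p - 3 - s.2)) := by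
    intro a ha b hb hab
    by_contra hne
    rw [Finset.mem_coe, Finset.mem_Icc] at ha hb
    have := Finset.disjoint_left.1
      (cutI_disjoint (p := p) (by omega) (by omega) hne)
      (hg a (Finset.mem_Icc.2 ha)).1
    exact this (hab ▸ (hg b (Finset.mem_Icc.2 hb)).1)
  calc p - 2 - (s.1 + s.2)
      = (Finset.Icc s.1 (p - 3 - s.2)).card := by rw [Nat.card_Icc]; omega
    _
      = ((Finset.Icc s.1 (p - 3 - s.2)).image g).card :=
        (Finset.card_image_of_injOn hinj).symm
    _ = (↑((Finset.Icc s.1 (p - 3 - s.2)).image g) : Set (Sym2 (ℕ × ℕ))).ncard :=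
        (Set.ncard_coe_finset _).symm
    _ ≤ (sharedEdges P).ncard := by
        refine Set.ncard_le_ncard ?_ hfin
        intro e he
        simp only [Finset.coe_image, Set.mem_image, Finset.mem_coe] at he
        obtain ⟨k, hk, rfl⟩ := he
        exact (hg k hk).2
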